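/- If F ⊆ C([n], a) is an intersecting family of a-element subsets of [n], then the shadow ∂F (the family of all (a-1)-subsets obtained by deleting one element from some member of F) satisfies |∂F| ≥ |F|. -/

import Mathlib

open Finset
open scoped FinsetFamily

/-- A family is shifted if replacing any element by a smaller absent one stays in the family. -/
def KShifted (F : Finset (Finset ℕ)) : Prop :=
  ∀ A ∈ F, ∀ i j : ℕ, i < j → j ∈ A → i ∉ A → insert i (A.erase j) ∈ F

lemma compress_eq_of (i j : ℕ) (A : Finset ℕ) (hij : i ≠ j) (hj : j ∈ A) (hi : i ∉ A) :
    UV.compress {i} {j} A = insert i (A.erase j) := by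
  rw [UV.compress_of_disjoint_of_le (by simpa using hi) (by simpa using hj)]
  ext x
  simp [Finset.mem_sdiff, Finset.mem_insert, Finset.mem_erase]
  constructor
  · rintro ⟨h1 | h1, h2⟩
    · exact Or.inl h1
    · exact Or.inr ⟨h2, h1⟩
  · rintro (h1 | ⟨h1, h2⟩)
    · exact ⟨Or.inl h1, fun hx => hij (h1 ▸ hx)⟩
    · exact ⟨Or.inr h2, h1⟩

lemma compress_eq_self_of (i j : ℕ) (A : Finset ℕ) (h : ¬(j ∈ A ∧ i ∉ A)) :
    UV.compress {i} {j} A = A := by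
  unfold UV.compress
  rw [if_neg]
  rintro ⟨h1, h2⟩
  exact h ⟨by simpa using h2, by simpa using h1⟩

lemma compress_cases (i j : ℕ) (A : Finset ℕ) (hij : i ≠ j) :
    UV.compress {i} {j} A = A ∨ (j ∈ A ∧ i ∉ A ∧ UV.compress {i} {j} A = insert i (A.erase j)) := by
  by_cases h : j ∈ A ∧ i ∉ A
  · exact Or.inr ⟨h.1, h.2, compress_eq_of i j A hij h.1 h.2⟩
  · exact Or.inl (compress_eq_self_of i j A h)

/-- singleton compressions preserve the intersecting property. -/
lemma compression_intersecting (i j : ℕ) (hij : i < j) (F : Finset (Finset ℕ))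
    (hint : ∀ A ∈ F, ∀ B ∈ F, (A ∩ B).Nonempty) :
    ∀ A ∈ UV.compression {i} {j} F, ∀ B ∈ UV.compression {i} {j} F, (A ∩ B).Nonempty := by
  have hij' : i ≠ j := hij.ne
  -- helper: X ∈ F with compress X ∈ F, Y a "new" compressed set
  have helper : ∀ X ∈ F, UV.compress {i} {j} X ∈ F →
      ∀ B ∈ F, j ∈ B → i ∉ B → (X ∩ insert i (B.erase j)).Nonempty := by
    intro X hX hcX B hB hjB hiB
    by_cases hz : ∃ z ∈ X ∩ B, z ≠ j
    · obtain ⟨z, hz1, hz2⟩ := hz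
      rw [mem_inter] at hz1
      exact ⟨z, mem_inter.2 ⟨hz1.1, mem_insert.2 (Or.inr (mem_erase.2 ⟨hz2, hz1.2⟩))⟩⟩
    · push_neg at hz
      obtain ⟨w, hw⟩ := hint X hX B hB
      rw [mem_inter] at hw
      have hjX : j ∈ X := hz w (mem_inter.2 hw) ▸ hw.1
      by_cases hiX : i ∈ X
      · exact ⟨i, mem_inter.2 ⟨hiX, mem_insert_self _ _⟩⟩
      · exfalso
        rw [compress_eq_of i j X hij' hjX hiX] at hcX
        obtain ⟨w', hw'⟩ := hint _ hcX B hB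
        rw [mem_inter, mem_insert, mem_erase] at hw'
        rcases hw'.1 with h | h
        · exact hiB (h ▸ hw'.2)
        · exact h.1 (hz w' (mem_inter.2 ⟨h.2, hw'.2⟩))
  intro X hX Y hY
  rw [UV.mem_compression] at hX hY
  rcases hX with ⟨hX, hcX⟩ | ⟨hXn, A, hA, hcA⟩
  · rcases hY with ⟨hY, _⟩ | ⟨hYn, B, hB, hcB⟩
    · exact hint X hX Y hY
    · have hBne : UV.compress {i} {j} B ≠ B := fun h => hYn (by rw [← hcB, h]; exact hB)
      rcases compress_cases i j B hij' with h | ⟨h1, h2, h3⟩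
      · exact absurd h hBne
      · rw [← hcB, h3]
        exact helper X hX hcX B hB h1 h2
  · rcases hY with ⟨hY, hcY⟩ | ⟨hYn, B, hB, hcB⟩
    · have hAne : UV.compress {i} {j} A ≠ A := fun h => hXn (by rw [← hcA, h]; exact hA)
      rcases compress_cases i j A hij' with h | ⟨h1, h2, h3⟩
      · exact absurd h hAne
      · rw [← hcA, h3, inter_comm]
        exact helper Y hY hcY A hA h1 h2
    · have hAne : UV.compress {i} {j} A ≠ A := fun h => hXn (by rw [← hcA, h]; exact hA)
      rcases compress_cases i j A hij' with h | ⟨h1, h2, h3⟩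
      · exact absurd h hAne
      · rcases compress_cases i j B hij' with h' | ⟨h1', h2', h3'⟩
        · exact absurd h' (fun h => hYn (by rw [← hcB, h]; exact hB))
        · refine ⟨i, mem_inter.2 ⟨?_, ?_⟩⟩
          · rw [← hcA, h3]; exact mem_insert_self _ _
          · rw [← hcB, h3']; exact mem_insert_self _ _

lemma sum_swap_lt {i j : ℕ} {A : Finset ℕ} (hij : i < j) (hj : j ∈ A) (hi : i ∉ A) :
    (∑ x ∈ insert i (A.erase j), x) < ∑ x ∈ A, x := by
  rw [Finset.sum_insert (fun h => hi (mem_of_mem_erase h)), ← Finset.add_sum_erase A _ hj]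
  exact Nat.add_lt_add_right hij _

lemma mem_compression_cases {i j : ℕ} (hij : i < j) {F : Finset (Finset ℕ)} {X : Finset ℕ}
    (hX : X ∈ UV.compression {i} {j} F) :
    X ∈ F ∨ ∃ B ∈ F, j ∈ B ∧ i ∉ B ∧ X = insert i (B.erase j) := by
  rw [UV.mem_compression] at hX
  rcases hX with ⟨hX, _⟩ | ⟨hXn, B, hB, hcB⟩
  · exact Or.inl hX
  · rcases compress_cases i j B hij.ne with h | ⟨h1, h2, h3⟩
    · exact absurd (by rw [← hcB, h]; exact hB) hXn
    · exact Or.inr ⟨B, hB, h1, h2, by rw [← hcB, h3]⟩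

lemma measure_compression_lt {i j : ℕ} (hij : i < j) {F : Finset (Finset ℕ)} {A₀ : Finset ℕ}
    (hA₀ : A₀ ∈ F) (hj : j ∈ A₀) (hi : i ∉ A₀) (hnot : insert i (A₀.erase j) ∉ F) :
    (∑ A ∈ UV.compression {i} {j} F, ∑ x ∈ A, x) < ∑ A ∈ F, ∑ x ∈ A, x := by
  set c : Finset ℕ → Finset ℕ := UV.compress {i} {j} with hc
  have hdef : UV.compression {i} {j} F =
      (F.filter fun a => c a ∈ F) ∪ ((F.image c).filter fun a => a ∉ F) := rfl
  have hdisj : Disjoint (F.filter fun a => c a ∈ F) ((F.image c).filter fun a => a ∉ F) := by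
    simp only [Finset.disjoint_left, mem_filter]
    rintro a ⟨ha, -⟩ ⟨-, ha'⟩
    exact ha' ha
  have hsub : ((F.image c).filter fun a => a ∉ F) ⊆ (F.filter fun a => c a ∉ F).image c := by
    intro Y hY
    rw [mem_filter, mem_image] at hY
    obtain ⟨⟨B, hB, hBY⟩, hYn⟩ := hY
    exact mem_image.2 ⟨B, mem_filter.2 ⟨hB, by rw [hBY]; exact hYn⟩, hBY⟩
  have hinj : ∀ x ∈ (F.filter fun a => c a ∉ F), ∀ y ∈ (F.filter fun a => c a ∉ F),
      c x = c y → x = y := by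
    intro x hx y hy hxy
    exact UV.compress_injOn (by simpa using hx) (by simpa using hy) hxy
  have himg : (∑ A ∈ (F.filter fun a => c a ∉ F).image c, ∑ x ∈ A, x)
      = ∑ B ∈ F.filter fun a => c a ∉ F, ∑ x ∈ c B, x := Finset.sum_image hinj
  have hne : (F.filter fun a => c a ∉ F).Nonempty :=
    ⟨A₀, mem_filter.2 ⟨hA₀, by rw [hc, compress_eq_of i j A₀ hij.ne hj hi]; exact hnot⟩⟩
  have hstrict : (∑ B ∈ F.filter fun a => c a ∉ F, ∑ x ∈ c B, x)
      < ∑ B ∈ F.filter fun a => c a ∉ F, ∑ x ∈ B, x := by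
    refine Finset.sum_lt_sum_of_nonempty hne ?_
    intro B hB
    rw [mem_filter] at hB
    rcases compress_cases i j B hij.ne with h | ⟨h1, h2, h3⟩
    · exact absurd (show c B ∈ F by rw [hc, h]; exact hB.1) hB.2
    · rw [hc, h3]
      exact sum_swap_lt hij h1 h2
  calc (∑ A ∈ UV.compression {i} {j} F, ∑ x ∈ A, x)
      = (∑ A ∈ F.filter fun a => c a ∈ F, ∑ x ∈ A, x)
        + ∑ A ∈ (F.image c).filter fun a => a ∉ F, ∑ x ∈ A, x := by
        rw [hdef, Finset.sum_union hdisj]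
    _ ≤ (∑ A ∈ F.filter fun a => c a ∈ F, ∑ x ∈ A, x)
        + ∑ B ∈ F.filter fun a => c a ∉ F, ∑ x ∈ c B, x := by
        refine Nat.add_le_add_left ?_ _
        rw [← himg]
        exact Finset.sum_le_sum_of_subset hsub
    _ < (∑ A ∈ F.filter fun a => c a ∈ F, ∑ x ∈ A, x)
        + ∑ B ∈ F.filter fun a => c a ∉ F, ∑ x ∈ B, x := Nat.add_lt_add_left hstrict _
    _ = ∑ A ∈ F, ∑ x ∈ A, x := Finset.sum_filter_add_sum_filter_not _ _ _

lemma exists_shifted (M : ℕ) : ∀ (F : Finset (Finset ℕ)) (n k : ℕ),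
    (∑ A ∈ F, ∑ x ∈ A, x) ≤ M →
    (∀ A ∈ F, A.card = k) → (∀ A ∈ F, ∀ x ∈ A, x < n) →
    (∀ A ∈ F, ∀ B ∈ F, (A ∩ B).Nonempty) →
    ∃ G : Finset (Finset ℕ), G.card = F.card ∧ G.shadow.card ≤ F.shadow.card ∧
      KShifted G ∧ (∀ A ∈ G, A.card = k) ∧ (∀ A ∈ G, ∀ x ∈ A, x < n) ∧
      (∀ A ∈ G, ∀ B ∈ G, (A ∩ B).Nonempty) := by
  induction M using Nat.strong_induction_on with
  | _ M IH =>
    intro F n k hM hk hn hint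
    by_cases hS : KShifted F
    · exact ⟨F, rfl, le_refl _, hS, hk, hn, hint⟩
    · simp only [KShifted, not_forall] at hS
      obtain ⟨A₀, hA₀, i, j, hij, hjA, hiA, hnot⟩ := hS
      set C := UV.compression {i} {j} F with hC
      have hmeas : (∑ A ∈ C, ∑ x ∈ A, x) < ∑ A ∈ F, ∑ x ∈ A, x :=
        measure_compression_lt hij hA₀ hjA hiA hnot
      have hmeas' : (∑ A ∈ C, ∑ x ∈ A, x) < M := lt_of_lt_of_le hmeas hM
      have hjn : j < n := hn A₀ hA₀ j hjA
      have hCk : ∀ A ∈ C, A.card = k := by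
        intro A hA
        rcases mem_compression_cases hij hA with h | ⟨B, hB, h1, h2, h3⟩
        · exact hk A h
        · rw [h3, card_insert_of_notMem (fun h => h2 (mem_of_mem_erase h)),
            card_erase_of_mem h1, hk B hB]
          have hk1 : 0 < k := by rw [← hk B hB]; exact card_pos.2 ⟨j, h1⟩
          omega
      have hCn : ∀ A ∈ C, ∀ x ∈ A, x < n := by
        intro A hA x hx
        rcases mem_compression_cases hij hA with h | ⟨B, hB, h1, h2, h3⟩
        · exact hn A h x hx
        · rw [h3, mem_insert] at hx
          rcases hx with rfl | hx
          · omega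
          · exact hn B hB x (mem_of_mem_erase hx)
      obtain ⟨G, g1, g2, g3, g4, g5, g6⟩ := IH _ hmeas' C n k (le_refl _) hCk hCn
        (compression_intersecting i j hij F hint)
      refine ⟨G, ?_, ?_, g3, g4, g5, g6⟩
      · rw [g1, hC, UV.card_compression]
      · refine le_trans g2 ?_
        rw [hC]
        refine UV.card_shadow_compression_le _ _ ?_
        intro x hx
        refine ⟨j, mem_singleton_self j, ?_⟩
        rw [mem_singleton] at hx
        subst hx
        simp only [Finset.erase_singleton]
        exact UV.isCompressed_self _ _

lemma dom_aux (N : ℕ) : ∀ (F : Finset (Finset ℕ)), KShifted F → ∀ A B : Finset ℕ, A ∈ F →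
    (∑ x ∈ A, x) < N → B.card = A.card →
    (∀ t, (B.filter (t ≤ ·)).card ≤ (A.filter (t ≤ ·)).card) → B ∈ F := by
  induction N with
  | zero => intro F _ A B _ h; exact absurd h (Nat.not_lt_zero _)
  | succ N IH =>
    intro F hS A B hA hsum hcard hdom
    by_cases hBA : B = A
    · exact hBA ▸ hA
    · have hABne : (A \ B).Nonempty := by
        rw [sdiff_nonempty]
        intro hsub
        exact hBA (eq_of_subset_of_card_le hsub (le_of_eq hcard)).symm
      have hBAne : (B \ A).Nonempty := by
        rw [sdiff_nonempty]
        intro hsub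
        exact hBA (eq_of_subset_of_card_le hsub (le_of_eq hcard.symm))
      set j := (A \ B).max' hABne with hjdef
      set i := (B \ A).max' hBAne with hidef
      have hjmem := (A \ B).max'_mem hABne
      have himem := (B \ A).max'_mem hBAne
      rw [mem_sdiff] at hjmem himem
      obtain ⟨hjA, hjB⟩ := hjmem
      obtain ⟨hiB, hiA⟩ := himem
      have hsubA : A.filter (j+1 ≤ ·) ⊆ B.filter (j+1 ≤ ·) := by
        intro x hx
        rw [mem_filter] at hx ⊢
        refine ⟨?_, hx.2⟩
        by_contra hxB
        have := (A \ B).le_max' x (mem_sdiff.2 ⟨hx.1, hxB⟩)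
        omega
      have heq : A.filter (j+1 ≤ ·) = B.filter (j+1 ≤ ·) :=
        eq_of_subset_of_card_le hsubA (hdom (j+1))
      have hij : i < j := by
        rcases lt_trichotomy i j with h | h | h
        · exact h
        · exact absurd (show j ∈ B by rw [← h]; exact hiB) hjB
        · exfalso
          have : i ∈ B.filter (j+1 ≤ ·) := mem_filter.2 ⟨hiB, by omega⟩
          rw [← heq, mem_filter] at this
          exact hiA this.1
      have hA' : insert i (A.erase j) ∈ F := hS A hA i j hij hjA hiA
      have hsum' : (∑ x ∈ insert i (A.erase j), x) < N := by
        have := sum_swap_lt hij hjA hiA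
        omega
      have hiej : i ∉ A.erase j := fun h => hiA (mem_of_mem_erase h)
      have hcard' : B.card = (insert i (A.erase j)).card := by
        rw [card_insert_of_notMem hiej, card_erase_of_mem hjA, hcard]
        have : 0 < A.card := card_pos.2 ⟨j, hjA⟩
        omega
      refine IH F hS _ B hA' hsum' hcard' ?_
      intro t
      rw [filter_insert, filter_erase]
      have hjf : t ≤ j → j ∈ A.filter (t ≤ ·) := fun h => mem_filter.2 ⟨hjA, h⟩
      by_cases hti : t ≤ i
      · rw [if_pos hti,
          card_insert_of_notMem (fun h => hiA (mem_of_mem_filter _ (mem_of_mem_erase h))),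
          card_erase_of_mem (hjf (by omega))]
        have h1 : 0 < (A.filter (t ≤ ·)).card := card_pos.2 ⟨j, hjf (by omega)⟩
        have h2 := hdom t
        omega
      · rw [if_neg hti]
        by_cases htj : t ≤ j
        · rw [card_erase_of_mem (hjf htj)]
          have hsub : B.filter (t ≤ ·) ⊆ (A.filter (t ≤ ·)).erase j := by
            intro x hx
            rw [mem_filter] at hx
            refine mem_erase.2 ⟨fun h => hjB (by subst h; exact hx.1), mem_filter.2 ⟨?_, hx.2⟩⟩
            by_contra hxA
            have := (B \ A).le_max' x (mem_sdiff.2 ⟨hx.1, hxA⟩)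
            omega
          have := card_le_card hsub
          rw [card_erase_of_mem (hjf htj)] at this
          exact this
        · rw [erase_eq_of_notMem (fun h => htj (mem_filter.1 h).2)]
          exact hdom t

lemma shifted_mem_of_dom {F : Finset (Finset ℕ)} (hS : KShifted F) {A B : Finset ℕ}
    (hA : A ∈ F) (hcard : B.card = A.card)
    (hdom : ∀ t, (B.filter (t ≤ ·)).card ≤ (A.filter (t ≤ ·)).card) : B ∈ F :=
  dom_aux ((∑ x ∈ A, x) + 1) F hS A B hA (Nat.lt_succ_self _) hcard hdom

lemma shifted_witness {F : Finset (Finset ℕ)} (hS : KShifted F)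
    (hint : ∀ A ∈ F, ∀ B ∈ F, (A ∩ B).Nonempty) :
    ∀ A ∈ F, ∃ s, 1 ≤ s ∧ s ≤ (A.filter (· < 2*s - 1)).card := by
  intro A hA
  by_contra hcon
  push_neg at hcon
  set k := A.card with hk
  have key : ∀ t, (A.filter (· < t)).card ≤ min k (t/2) := by
    intro t
    refine le_min (le_trans (card_filter_le _ _) (le_of_eq hk.symm)) ?_
    rcases Nat.eq_zero_or_pos t with rfl | ht
    · simp
    · have hsub : A.filter (· < t) ⊆ A.filter (· < 2*(t/2+1) - 1) :=
        monotone_filter_right _ (fun x hx => by omega)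
      have := hcon (t/2+1) (by omega)
      have := card_le_card hsub
      omega
  set O : Finset ℕ := (range k).image (fun u => 2*u+1) with hO
  set E : Finset ℕ := (range k).image (fun u => 2*u) with hE
  have hinjO : Function.Injective (fun u : ℕ => 2*u+1) := fun a b h => by dsimp at h; omega
  have hinjE : Function.Injective (fun u : ℕ => 2*u) := fun a b h => by dsimp at h; omega
  have hcardO : O.card = k := by rw [hO, card_image_of_injective _ hinjO, card_range]
  have hcardE : E.card = k := by rw [hE, card_image_of_injective _ hinjE, card_range]
  have hcount : ∀ X : Finset ℕ, X.card = k → ∀ t : ℕ,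
      (X.filter (t ≤ ·)).card = k - (X.filter (· < t)).card := by
    intro X hX t
    have h1 := card_filter_add_card_filter_not (s := X) (p := (t ≤ ·))
    have h2 : X.filter (fun x => ¬ t ≤ x) = X.filter (· < t) := by
      apply filter_congr; intro x _; simp [Nat.not_le]
    rw [h2] at h1
    omega
  have hcountO : ∀ t, (O.filter (· < t)).card = min k (t/2) := by
    intro t
    rw [hO, filter_image, card_image_of_injective _ hinjO]
    have : (range k).filter (fun x => 2*x+1 < t) = range (min k (t/2)) := by
      ext u; simp [mem_filter, mem_range]; omega
    rw [this, card_range]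
  have hdomO : ∀ t, (O.filter (t ≤ ·)).card ≤ (A.filter (t ≤ ·)).card := by
    intro t
    rw [hcount O hcardO t, hcount A hk.symm t, hcountO t]
    have := key t
    omega
  have hOF : O ∈ F := shifted_mem_of_dom hS hA (by rw [hcardO, hk]) hdomO
  have hdomE : ∀ t, (E.filter (t ≤ ·)).card ≤ (O.filter (t ≤ ·)).card := by
    intro t
    rw [hE, hO, filter_image, filter_image, card_image_of_injective _ hinjE,
      card_image_of_injective _ hinjO]
    exact card_le_card (monotone_filter_right _ (fun x hx => by omega))
  have hEF : E ∈ F := shifted_mem_of_dom hS hOF (by rw [hcardE, hcardO]) hdomE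
  obtain ⟨x, hx⟩ := hint E hEF O hOF
  rw [mem_inter, hE, hO] at hx
  obtain ⟨hx1, hx2⟩ := hx
  rw [mem_image] at hx1 hx2
  obtain ⟨u, _, hu⟩ := hx1
  obtain ⟨v, _, hv⟩ := hx2
  omega

lemma lym_nat (n k : ℕ) (hk : 1 ≤ k) (F : Finset (Finset ℕ))
    (hsub : ∀ A ∈ F, ∀ x ∈ A, x < n) (huni : ∀ A ∈ F, A.card = k) :
    F.card * k ≤ F.shadow.card * (n - k + 1) := by
  classical
  have hP : (F.sigma (fun A => A)).card = F.card * k := by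
    rw [card_sigma]
    rw [Finset.sum_congr rfl huni, Finset.sum_const, smul_eq_mul]
  have hshadow_facts : ∀ S ∈ F.shadow, S.card = k - 1 ∧ S ⊆ range n ∧ k ≤ n := by
    intro S hS
    rw [mem_shadow_iff] at hS
    obtain ⟨A, hA, x, hx, rfl⟩ := hS
    have hAsub : A ⊆ range n := fun y hy => mem_range.2 (hsub A hA y hy)
    have hkn : k ≤ n := by
      have := card_le_card hAsub
      rw [huni A hA, card_range] at this
      exact this
    exact ⟨by rw [card_erase_of_mem hx, huni A hA],
      fun y hy => hAsub (mem_of_mem_erase hy), hkn⟩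
  have hQ : (F.shadow.sigma (fun S => (range n).filter (· ∉ S))).card
      = F.shadow.card * (n - k + 1) := by
    rw [card_sigma]
    have : ∀ S ∈ F.shadow, ((range n).filter (· ∉ S)).card = n - k + 1 := by
      intro S hS
      obtain ⟨h1, h2, h3⟩ := hshadow_facts S hS
      have : (range n).filter (· ∉ S) = range n \ S := (sdiff_eq_filter _ _).symm
      rw [this, card_sdiff_of_subset h2, h1, card_range]
      omega
    rw [Finset.sum_congr rfl this, Finset.sum_const, smul_eq_mul]
  rw [← hP, ← hQ]
  refine card_le_card_of_injOn (fun p => ⟨p.1.erase p.2, p.2⟩) ?_ ?_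
  · rintro ⟨A, x⟩ hp
    rw [mem_coe, mem_sigma] at hp
    obtain ⟨hA, hx⟩ := hp
    refine mem_sigma.2 ⟨mem_shadow_iff.2 ⟨A, hA, x, hx, rfl⟩, ?_⟩
    exact mem_filter.2 ⟨mem_range.2 (hsub A hA x hx), notMem_erase _ _⟩
  · intro p hp q hq heq
    obtain ⟨A, x⟩ := p
    obtain ⟨B, y⟩ := q
    simp only [mem_coe, mem_sigma] at hp hq
    have heq' : A.erase x = B.erase y ∧ x = y := by
      constructor
      · exact congrArg Sigma.fst heq
      · have := congrArg (fun z : (Σ _ : Finset ℕ, ℕ) => z.2) heq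
        simpa using this
    obtain ⟨h1, rfl⟩ := heq'
    have : A = B := by rw [← insert_erase hp.2, h1, insert_erase hq.2]
    subst this
    rfl

lemma katona_main : ∀ n k : ℕ, ∀ F : Finset (Finset ℕ),
    (∀ A ∈ F, ∀ x ∈ A, x < n) → (∀ A ∈ F, A.card = k) →
    (∀ A ∈ F, ∃ s, 1 ≤ s ∧ s ≤ (A.filter (· < 2*s - 1)).card) →
    F.card ≤ F.shadow.card := by
  have empty_of_zero : ∀ (F : Finset (Finset ℕ)), (∀ A ∈ F, A.card = 0) →
      (∀ A ∈ F, ∃ s, 1 ≤ s ∧ s ≤ (A.filter (· < 2*s - 1)).card) → F = ∅ := by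
    intro F h0 hwit
    rw [eq_empty_iff_forall_notMem]
    intro A hA
    obtain ⟨s, hs1, hs2⟩ := hwit A hA
    have : (A.filter (· < 2*s - 1)).card ≤ A.card := card_filter_le _ _
    rw [h0 A hA] at this
    omega
  intro n
  induction n with
  | zero =>
    intro k F hsub huni hwit
    have : F = ∅ := by
      refine empty_of_zero F ?_ hwit
      intro A hA
      rw [card_eq_zero, eq_empty_iff_forall_notMem]
      intro x hx
      exact absurd (hsub A hA x hx) (Nat.not_lt_zero x)
    simp [this]
  | succ n IH =>
    intro k F hsub huni hwit
    rcases Nat.eq_zero_or_pos k with rfl | hk1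
    · rw [empty_of_zero F huni hwit]
      simp
    by_cases hdense : n + 2 ≤ 2*k
    · -- local LYM case
      have h := lym_nat (n+1) k hk1 F hsub huni
      have hle : (n+1) - k + 1 ≤ k := by omega
      have : F.card * k ≤ F.shadow.card * k :=
        le_trans h (Nat.mul_le_mul_left _ hle)
      exact Nat.le_of_mul_le_mul_right this hk1
    · -- peel off the top element n
      push_neg at hdense
      set F0 := F.filter (fun A => n ∉ A) with hF0
      set Fm := F.filter (fun A => n ∈ A) with hFm
      set F1 := Fm.image (fun A => A.erase n) with hF1
      have hF1mem : ∀ B ∈ F1, ∃ A, A ∈ F ∧ n ∈ A ∧ B = A.erase n := by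
        intro B hB
        rw [hF1, mem_image] at hB
        obtain ⟨A, hA, rfl⟩ := hB
        rw [hFm, mem_filter] at hA
        exact ⟨A, hA.1, hA.2, rfl⟩
      have hcards : F.card = F0.card + F1.card := by
        have himg : F1.card = Fm.card := by
          rw [hF1]
          refine card_image_of_injOn ?_
          rintro A hA B hB heq
          rw [mem_coe, hFm, mem_filter] at hA hB
          dsimp only at heq
          rw [← insert_erase hA.2, heq, insert_erase hB.2]
        rw [himg, hF0, hFm, add_comm]
        exact (card_filter_add_card_filter_not (p := fun A => n ∈ A)).symm
      have hIH0 : F0.card ≤ F0.shadow.card := by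
        refine IH k F0 ?_ ?_ ?_
        · intro A hA x hx
          rw [hF0, mem_filter] at hA
          have h1 := hsub A hA.1 x hx
          have h2 : x ≠ n := fun h => hA.2 (h ▸ hx)
          omega
        · intro A hA; exact huni A (mem_of_mem_filter _ hA)
        · intro A hA; exact hwit A (mem_of_mem_filter _ hA)
      have hIH1 : F1.card ≤ F1.shadow.card := by
        refine IH (k-1) F1 ?_ ?_ ?_
        · intro B hB x hx
          obtain ⟨A, hA, hnA, rfl⟩ := hF1mem B hB
          have h1 := hsub A hA x (mem_of_mem_erase hx)
          have h2 : x ≠ n := (mem_erase.1 hx).1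
          omega
        · intro B hB
          obtain ⟨A, hA, hnA, rfl⟩ := hF1mem B hB
          rw [card_erase_of_mem hnA, huni A hA]
        · intro B hB
          obtain ⟨A, hA, hnA, rfl⟩ := hF1mem B hB
          obtain ⟨s, hs1, hs2⟩ := hwit A hA
          have hsk : s ≤ k := le_trans hs2 (le_trans (card_filter_le _ _) (le_of_eq (huni A hA)))
          refine ⟨s, hs1, ?_⟩
          have : (A.erase n).filter (· < 2*s - 1) = A.filter (· < 2*s - 1) := by
            rw [filter_erase]
            refine erase_eq_of_notMem ?_
            intro h
            have := (mem_filter.1 h).2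
            omega
          rw [this]
          exact hs2
      have hnotmem1 : ∀ T ∈ F1.shadow, n ∉ T := by
        intro T hT
        rw [mem_shadow_iff] at hT
        obtain ⟨B, hB, y, hy, rfl⟩ := hT
        obtain ⟨A, hA, hnA, rfl⟩ := hF1mem B hB
        intro h
        exact (mem_erase.1 (mem_of_mem_erase h)).1 rfl
      have hsub0 : F0.shadow ⊆ F.shadow := shadow_monotone (filter_subset _ _)
      have hsub1 : (F1.shadow).image (insert n) ⊆ F.shadow := by
        intro T hT
        rw [mem_image] at hT
        obtain ⟨T', hT', rfl⟩ := hT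
        have hT'mem := hT'
        rw [mem_shadow_iff] at hT'
        obtain ⟨B, hB, y, hy, rfl⟩ := hT'
        obtain ⟨A, hA, hnA, rfl⟩ := hF1mem B hB
        have hyA : y ∈ A := mem_of_mem_erase hy
        have hyn : y ≠ n := fun h => (mem_erase.1 hy).1 (by rw [h])
        have hkey : insert n ((A.erase n).erase y) = A.erase y := by
          rw [erase_right_comm]
          exact insert_erase (mem_erase.2 ⟨fun h => hyn h.symm, hnA⟩)
        rw [hkey]
        exact mem_shadow_iff.2 ⟨A, hA, y, hyA, rfl⟩
      have hdisj : Disjoint F0.shadow ((F1.shadow).image (insert n)) := by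
        rw [disjoint_left]
        intro S hS hS'
        rw [mem_shadow_iff] at hS
        obtain ⟨C, hC, x, hx, rfl⟩ := hS
        rw [hF0, mem_filter] at hC
        rw [mem_image] at hS'
        obtain ⟨T, hT, hTS⟩ := hS'
        exact hC.2 (mem_of_mem_erase (by rw [← hTS]; exact mem_insert_self n T))
      have himgcard : ((F1.shadow).image (insert n)).card = F1.shadow.card := by
        refine card_image_of_injOn ?_
        intro T hT T' hT' heq
        rw [mem_coe] at hT hT'
        rw [← erase_insert (hnotmem1 T hT), heq, erase_insert (hnotmem1 T' hT')]
      calc F.card = F0.card + F1.card := hcards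
        _ ≤ F0.shadow.card + F1.shadow.card := Nat.add_le_add hIH0 hIH1
        _ = (F0.shadow ∪ (F1.shadow).image (insert n)).card := by
            rw [card_union_of_disjoint hdisj, himgcard]
        _ ≤ F.shadow.card := card_le_card (union_subset hsub0 hsub1)

theorem stmt_2 (n a : ℕ) (F : Finset (Finset (Fin n)))
    (hunif : ∀ A ∈ F, A.card = a)
    (hint : ∀ A ∈ F, ∀ B ∈ F, (A ∩ B).Nonempty) :
    F.card ≤ F.shadow.card := by
  classical
  set e : Fin n ↪ ℕ := Fin.valEmbedding with he
  set G : Finset (Finset ℕ) := F.image (fun A => A.map e) with hG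
  have hmapinj : Function.Injective (fun A : Finset (Fin n) => A.map e) :=
    fun A B h => Finset.map_injective e h
  have hcardG : G.card = F.card := card_image_of_injective _ hmapinj
  have hshadow : G.shadow = F.shadow.image (fun A => A.map e) := by
    ext S
    rw [mem_shadow_iff, mem_image]
    constructor
    · rintro ⟨A', hA', x, hx, rfl⟩
      rw [hG, mem_image] at hA'
      obtain ⟨A, hA, rfl⟩ := hA'
      rw [Finset.mem_map] at hx
      obtain ⟨y, hy, rfl⟩ := hx
      refine ⟨A.erase y, mem_shadow_iff.2 ⟨A, hA, y, hy, rfl⟩, ?_⟩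
      exact map_erase e A y
    · rintro ⟨S', hS', rfl⟩
      rw [mem_shadow_iff] at hS'
      obtain ⟨A, hA, y, hy, rfl⟩ := hS'
      refine ⟨A.map e, ?_, e y, mem_map_of_mem e hy, (map_erase e A y).symm⟩
      rw [hG, mem_image]
      exact ⟨A, hA, rfl⟩
  have hshadowcard : G.shadow.card = F.shadow.card := by
    rw [hshadow]
    exact card_image_of_injective _ hmapinj
  have hGmem : ∀ X ∈ G, ∃ A ∈ F, X = A.map e := by
    intro X hX
    rw [hG, mem_image] at hX
    obtain ⟨A, hA, rfl⟩ := hX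
    exact ⟨A, hA, rfl⟩
  have hGuni : ∀ X ∈ G, X.card = a := by
    intro X hX
    obtain ⟨A, hA, rfl⟩ := hGmem X hX
    rw [card_map]
    exact hunif A hA
  have hGsub : ∀ X ∈ G, ∀ x ∈ X, x < n := by
    intro X hX x hx
    obtain ⟨A, hA, rfl⟩ := hGmem X hX
    rw [Finset.mem_map] at hx
    obtain ⟨y, _, rfl⟩ := hx
    exact y.isLt
  have hGint : ∀ X ∈ G, ∀ Y ∈ G, (X ∩ Y).Nonempty := by
    intro X hX Y hY
    obtain ⟨A, hA, rfl⟩ := hGmem X hX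
    obtain ⟨B, hB, rfl⟩ := hGmem Y hY
    obtain ⟨z, hz⟩ := hint A hA B hB
    exact ⟨e z, by rw [← map_inter]; exact mem_map_of_mem e hz⟩
  obtain ⟨G', g1, g2, g3, g4, g5, g6⟩ := exists_shifted (∑ A ∈ G, ∑ x ∈ A, x) G n a
    (le_refl _) hGuni hGsub hGint
  have hwit := shifted_witness g3 g6
  have hmain := katona_main n a G' g5 g4 hwit
  calc F.card = G.card := hcardG.symm
    _ = G'.card := g1.symm
    _ ≤ G'.shadow.card := hmain
    _ ≤ G.shadow.card := g2
    _ = F.shadow.card := hshadowcard
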